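/- If A → B is a rank-preserving weak map of matroids (rk(A) = rk(B)), then the closure map φ_B restricted to flats of A is surjective onto flats of B; moreover it is surjective by rank: for every flat F of B there is a flat G of A with φ_B(G) = F and rk_A(G) = rk_B(F). -/

import Mathlib

/-- The rank of a set `X` in a matroid `M`: the maximum size of an independent
subset of `X`. -/
noncomputable def mrk {α : Type*} (M : Matroid α) (X : Set α) : ℕ :=
  sSup {n | ∃ I, M.Indep I ∧ I ⊆ X ∧ I.ncard = n}

lemma flat_closure' {α : Type*} (M : Matroid α) (X : Set α) : M.IsFlat (M.closure X) := by
  refine ⟨fun I Y hI hIY => ?_, M.closure_subset_ground X⟩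
  have h1 : M.closure I = M.closure X := by
    rw [hI.isBasis'.closure_eq_closure, M.closure_closure]
  have h2 := hIY.isBasis'.closure_eq_closure
  calc Y ⊆ M.closure Y := M.subset_closure Y hIY.subset_ground
    _ = M.closure I := h2.symm
    _ = M.closure X := h1

lemma mrk_eq_of_basis' {α : Type*} {M : Matroid α} [M.Finite] {I X : Set α}
    (h : M.IsBasis' I X) : mrk M X = I.ncard := by
  have hIfin : I.Finite := M.set_finite I h.indep.subset_ground
  have hub : ∀ n ∈ {n | ∃ J, M.Indep J ∧ J ⊆ X ∧ J.ncard = n}, n ≤ I.ncard := by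
    rintro n ⟨J, hJ, hJX, rfl⟩
    have hJfin : J.Finite := M.set_finite J hJ.subset_ground
    by_contra hlt
    push_neg at hlt
    have hcard : I.encard < J.encard := by
      rw [hIfin.encard_eq_coe_toFinset_card, hJfin.encard_eq_coe_toFinset_card,
        Nat.cast_lt, ← Set.ncard_eq_toFinset_card I hIfin,
        ← Set.ncard_eq_toFinset_card J hJfin]
      exact hlt
    obtain ⟨e, heJI, hins⟩ := h.indep.augment hJ hcard
    have : e ∈ I := by
      have := h.2 ⟨hins, Set.insert_subset (hJX heJI.1) h.subset⟩
        (Set.subset_insert e I)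
      exact this (Set.mem_insert e I)
    exact heJI.2 this
  refine le_antisymm (csSup_le ⟨I.ncard, I, h.indep, h.subset, rfl⟩ hub) ?_
  exact le_csSup ⟨I.ncard, hub⟩ ⟨I, h.indep, h.subset, rfl⟩

/-- If `A → B` is a rank-preserving weak map of matroids, then
`φ_B` restricted to flats of `A` is surjective onto flats of `B`, and moreover
surjective by rank: every flat `F` of `B` is `φ_B(G)` for some flat `G` of `A`
with `rk_A(G) = rk_B(F)`. -/
theorem stmt5 {α : Type*} (A B : Matroid α) [A.Finite] [B.Finite]
    (hE : A.E = B.E) (hweak : ∀ I : Set α, B.Indep I → A.Indep I)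
    (hrk : mrk A A.E = mrk B B.E) :
    (∀ F : Set α, B.IsFlat F → ∃ G : Set α, A.IsFlat G ∧ B.closure G = F) ∧
    (∀ F : Set α, B.IsFlat F →
      ∃ G : Set α, A.IsFlat G ∧ B.closure G = F ∧ mrk A G = mrk B F) := by
  have main : ∀ F : Set α, B.IsFlat F →
      ∃ G : Set α, A.IsFlat G ∧ B.closure G = F ∧ mrk A G = mrk B F := by
    intro F hF
    have hFE : F ⊆ B.E := hF.subset_ground
    obtain ⟨I, hI⟩ := B.exists_isBasis F
    have hIA : A.Indep I := hweak I hI.indep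
    refine ⟨A.closure I, flat_closure' A I, ?_, ?_⟩
    · -- `A.closure I ⊆ B.closure I`
      have hsub : A.closure I ⊆ B.closure I := by
        intro x hx
        by_cases hxI : x ∈ I
        · exact B.subset_closure I hI.indep.subset_ground hxI
        have hxE : x ∈ B.E := hE ▸ A.mem_ground_of_mem_closure hx
        by_contra hxB
        have hins : B.Indep (insert x I) :=
          ((hI.indep.notMem_closure_iff hxE).mp hxB).1
        have hinsA : A.Indep (insert x I) := hweak _ hins
        exact ((hIA.notMem_closure_iff_of_notMem hxI
          (hE.symm ▸ hxE)).mpr hinsA) hx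
      have hIF : B.closure I = F := by
        rw [hI.closure_eq_closure, hF.closure]
      refine subset_antisymm ?_ ?_
      · have := B.closure_subset_closure hsub
        rwa [B.closure_closure, hIF] at this
      · rw [← hIF]
        exact B.closure_subset_closure (A.subset_closure I hIA.subset_ground)
    · have h1 : A.IsBasis' I (A.closure I) := hIA.isBasis_closure.isBasis'
      have h2 : B.IsBasis' I F := hI.isBasis'
      rw [mrk_eq_of_basis' h1, mrk_eq_of_basis' h2]
  exact ⟨fun F hF => by obtain ⟨G, h1, h2, _⟩ := main F hF; exact ⟨G, h1, h2⟩, main⟩
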